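/- Let $V$ be a locally convex space and $C \subseteq V'$ a weak-*-closed convex subset such that the cone $B(C) = \{v : \inf \langle C, v\rangle > -\infty\}$ has nonempty interior. Then $C = \{\alpha \in V' : \alpha(x) \geq \inf\langle C, x\rangle \text{ for all } x \in B(C)^0\}$, where $B(C)^0$ denotes the interior of $B(C)$. -/

import Mathlib

open Filter Set Topology

/-- Every continuous linear functional on the weak-* dual is evaluation at a point. -/
theorem weakdual_clm_exists_eval {V : Type*} [AddCommGroup V] [Module ℝ V] [TopologicalSpace V]
    (f : WeakDual ℝ V →L[ℝ] ℝ) : ∃ v : V, ∀ β : WeakDual ℝ V, f β = β v := by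
  classical
  set g : WeakDual ℝ V → V → ℝ := fun β v => β v with hg
  have hmem : f ⁻¹' Set.Ioo (-1 : ℝ) 1 ∈ 𝓝 (0 : WeakDual ℝ V) := by
    have h1 : Set.Ioo (-1 : ℝ) 1 ∈ 𝓝 (f 0) := by
      rw [map_zero]; exact Ioo_mem_nhds (by norm_num) (by norm_num)
    exact f.continuous.continuousAt.preimage_mem_nhds h1
  have hnh : 𝓝 (0 : WeakDual ℝ V) = Filter.comap g (𝓝 (g 0)) := nhds_induced g 0
  rw [hnh, Filter.mem_comap] at hmem
  obtain ⟨W, hW, hWsub⟩ := hmem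
  have hg0 : g 0 = 0 := rfl
  rw [hg0, nhds_pi] at hW
  obtain ⟨I, t, htm, hsub⟩ := Filter.mem_pi'.mp hW
  let L : I → (WeakDual ℝ V →ₗ[ℝ] ℝ) := fun v =>
    { toFun := fun β => β (v : V)
      map_add' := fun a b => rfl
      map_smul' := fun c a => rfl }
  have hker : ⨅ i, LinearMap.ker (L i) ≤ LinearMap.ker (f : WeakDual ℝ V →ₗ[ℝ] ℝ) := by
    intro β hβ
    simp only [Submodule.mem_iInf, LinearMap.mem_ker] at hβ ⊢
    have key : ∀ s : ℝ, f (s • β) ∈ Set.Ioo (-1 : ℝ) 1 := by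
      intro s
      apply hWsub
      apply hsub
      intro v hv
      have hβv : β v = 0 := hβ ⟨v, hv⟩
      have : g (s • β) v = 0 := by
        show (s • β) v = 0
        change s • β v = 0
        rw [hβv, smul_zero]
      rw [this]
      exact mem_of_mem_nhds (htm v)
    by_contra hfb
    have h2 := key (2 / f β)
    rw [map_smul, smul_eq_mul] at h2
    have hne0 : (f β : ℝ) ≠ 0 := hfb
    rw [div_mul_cancel₀ _ hne0] at h2
    linarith [h2.2]
  have hspan := mem_span_of_iInf_ker_le_ker hker
  rw [Submodule.mem_span_range_iff_exists_fun] at hspan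
  obtain ⟨c, hc⟩ := hspan
  refine ⟨∑ i, c i • (i : V), fun β => ?_⟩
  have hfb : f β = (∑ i, c i • L i) β := by
    rw [hc]; rfl
  rw [hfb]
  rw [LinearMap.sum_apply, map_sum]
  congr 1
  ext i
  rw [LinearMap.smul_apply, map_smul]
  rfl

/-- If the cone `B(C)` of a nonempty weak-*-closed convex set `C ⊆ V'` has
nonempty interior, then `C` is recovered from its support function on the
interior `B(C)⁰`. -/
theorem stmt_7 {V : Type*} [AddCommGroup V] [Module ℝ V] [TopologicalSpace V]
    [IsTopologicalAddGroup V] [ContinuousSMul ℝ V] [LocallyConvexSpace ℝ V]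
    (C : Set (WeakDual ℝ V)) (hne : C.Nonempty) (hcl : IsClosed C) (hconv : Convex ℝ C)
    (hint : (interior {v : V | BddBelow ((fun β : WeakDual ℝ V => β v) '' C)}).Nonempty) :
    C = {α : WeakDual ℝ V |
          ∀ x ∈ interior {v : V | BddBelow ((fun β : WeakDual ℝ V => β v) '' C)},
            sInf ((fun β : WeakDual ℝ V => β x) '' C) ≤ α x} := by
  set Bset : Set V := {v : V | BddBelow ((fun β : WeakDual ℝ V => β v) '' C)} with hBset
  -- Convexity of `Bset`
  have hBconv : Convex ℝ Bset := by
    intro u hu w hw a b ha hb hab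
    obtain ⟨m, hm⟩ := hu
    obtain ⟨n, hn⟩ := hw
    refine ⟨a * m + b * n, ?_⟩
    rintro r ⟨β, hβ, rfl⟩
    have h1 : m ≤ β u := hm ⟨β, hβ, rfl⟩
    have h2 : n ≤ β w := hn ⟨β, hβ, rfl⟩
    have : β (a • u + b • w) = a * β u + b * β w := by
      rw [map_add, map_smul, map_smul, smul_eq_mul, smul_eq_mul]
    show a * m + b * n ≤ β (a • u + b • w)
    rw [this]
    have := mul_le_mul_of_nonneg_left h1 ha
    have := mul_le_mul_of_nonneg_left h2 hb
    linarith
  apply Set.Subset.antisymm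
  · -- easy inclusion
    intro α hα x hx
    have hxB : x ∈ Bset := interior_subset hx
    exact csInf_le hxB ⟨α, hα, rfl⟩
  · -- hard inclusion
    intro α hα
    by_contra hαC
    haveI : LocallyConvexSpace ℝ (WeakDual ℝ V) := WeakBilin.locallyConvexSpace
    haveI : IsTopologicalAddGroup (WeakDual ℝ V) := WeakBilin.instIsTopologicalAddGroup _
    haveI : ContinuousSMul ℝ (WeakDual ℝ V) := WeakBilin.instContinuousSMul _
    obtain ⟨f, u, hfC, hfα⟩ := geometric_hahn_banach_closed_point hconv hcl hαC
    obtain ⟨w, hw⟩ := weakdual_clm_exists_eval f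
    -- set x := -w, c := -u : for all β ∈ C, c ≤ β x and α x < c
    set x : V := -w with hxdef
    set c : ℝ := -u with hcdef
    have hCx : ∀ β ∈ C, c ≤ β x := by
      intro β hβ
      have := hfC β hβ
      rw [hw β] at this
      have hβx : β x = -(β w) := by rw [hxdef, map_neg]
      rw [hβx]
      linarith
    have hαx : α x < c := by
      have := hfα
      rw [hw α] at this
      have : α x = -(α w) := by rw [hxdef, map_neg]
      linarith [hfα, hw α ▸ hfα]
    have hxB : x ∈ Bset := ⟨c, by rintro r ⟨β, hβ, rfl⟩; exact hCx β hβ⟩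
    obtain ⟨x₀, hx₀⟩ := hint
    set m₀ : ℝ := sInf ((fun β : WeakDual ℝ V => β x₀) '' C) with hm₀
    have hx₀B : x₀ ∈ Bset := interior_subset hx₀
    have hm₀le : ∀ β ∈ C, m₀ ≤ β x₀ := fun β hβ => csInf_le hx₀B ⟨β, hβ, rfl⟩
    have hαx₀ : m₀ ≤ α x₀ := hα x₀ hx₀
    -- choose t ∈ (0,1)
    set d : ℝ := c - α x with hd
    have hdpos : 0 < d := by rw [hd]; linarith
    set a : ℝ := α x₀ - m₀ with hadef
    have hanneg : 0 ≤ a := by rw [hadef]; linarith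
    set t : ℝ := (a + 1) / (a + 1 + d) with ht
    have hden : 0 < a + 1 + d := by linarith
    have ht0 : 0 < t := div_pos (by linarith) hden
    have ht1 : t < 1 := by
      rw [ht, div_lt_one hden]; linarith
    have hkey : (1 - t) * a < t * d := by
      have h1t : 1 - t = d / (a + 1 + d) := by
        rw [ht]; field_simp; ring
      rw [h1t, ht, div_mul_eq_mul_div, div_mul_eq_mul_div, div_lt_div_iff_of_pos_right hden]
      nlinarith
    -- the combination point
    set y : V := (1 - t) • x₀ + t • x with hy
    have hyint : y ∈ interior Bset :=
      hBconv.combo_interior_self_mem_interior hx₀ hxB (by linarith) (le_of_lt ht0) (by ring)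
    have hylow : ∀ β ∈ C, (1 - t) * m₀ + t * c ≤ β y := by
      intro β hβ
      have : β y = (1 - t) * β x₀ + t * β x := by
        rw [hy, map_add, map_smul, map_smul, smul_eq_mul, smul_eq_mul]
      rw [this]
      have h1 := mul_le_mul_of_nonneg_left (hm₀le β hβ) (by linarith : (0:ℝ) ≤ 1 - t)
      have h2 := mul_le_mul_of_nonneg_left (hCx β hβ) (le_of_lt ht0)
      linarith
    have hsinf : (1 - t) * m₀ + t * c ≤ sInf ((fun β : WeakDual ℝ V => β y) '' C) := by
      apply le_csInf (hne.image _)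
      rintro r ⟨β, hβ, rfl⟩
      exact hylow β hβ
    have hαy : α y = (1 - t) * α x₀ + t * α x := by
      rw [hy, map_add, map_smul, map_smul, smul_eq_mul, smul_eq_mul]
    have := hα y hyint
    rw [hαy] at this
    -- contradiction
    have : (1 - t) * m₀ + t * c ≤ (1 - t) * α x₀ + t * α x := le_trans hsinf this
    nlinarith [this, hkey]
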